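/- arXiv:2309.06144 — 3 statements merged into one kernel-verified Lean document; each statement's English description precedes it below -/
import Mathlib

section
/- Let G be a virtually abelian group with a finite-index normal abelian subgroup H, and let U be a set of coset representatives for H in G. Then for any g ∈ G written as g = hu with h ∈ H and u ∈ U, the conjugacy class of g satisfies [g] = ⋃_{v ∈ U} [H, vuv⁻¹] · (vgv⁻¹), where [H,x] = {[y,x] : y ∈ H}. -/
variable {G : Type*} [Group G]

/-- Word length of `g` over the alphabet `S ∪ S⁻¹`. -/
noncomputable def wordLength (S : Set G) (g : G) : ℕ :=
  sInf {n | ∃ w : List G, (∀ x ∈ w, x ∈ S ∨ x⁻¹ ∈ S) ∧ w.prod = g ∧ w.length = n}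

/-- Word metric on `G` relative to `S`. -/
noncomputable def wordDist (S : Set G) (x y : G) : ℕ := wordLength S (x⁻¹ * y)

/-- Growth function of a subset `U` of `G` relative to `S`. -/
noncomputable def growth (S : Set G) (U : Set G) (n : ℕ) : ℕ :=
  Set.ncard {g ∈ U | wordLength S g ≤ n}

/-- `f ≼ g` for growth functions. -/
def Dominates (f g : ℕ → ℕ) : Prop :=
  ∃ l : ℕ, 1 ≤ l ∧ ∀ n, f n ≤ l * g (l * n + l) + l

/-- Equivalence of growth functions. -/
def GrowthEquiv (f g : ℕ → ℕ) : Prop := Dominates f g ∧ Dominates g f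

/-- The conjugacy class of `g` in `G`. -/
def conjClass (g : G) : Set G := {x | ∃ y : G, x = y * g * y⁻¹}

open scoped commutatorElement


private lemma key_comm {G : Type*} [Group G] (H : Subgroup G) [H.Normal]
    (hab : ∀ x ∈ H, ∀ y ∈ H, x * y = y * x)
    {k a : G} (hk : k ∈ H) (ha : a ∈ H) (b : G) : ⁅k, a * b⁆ = ⁅k, b⁆ := by
  have hmem : b * k⁻¹ * b⁻¹ ∈ H := Subgroup.Normal.conj_mem ‹H.Normal› k⁻¹ (inv_mem hk) b
  have hc : a * (b * k⁻¹ * b⁻¹) = (b * k⁻¹ * b⁻¹) * a := hab a ha _ hmem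
  have h1 : ⁅k, a * b⁆ = k * (a * (b * k⁻¹ * b⁻¹)) * a⁻¹ := by
    simp only [commutatorElement_def]; group
  rw [h1, hc]
  simp only [commutatorElement_def]; group

/-- in a virtually abelian group, a conjugacy class is a union of translated
commutator sets. -/
theorem stmt_9 {G : Type*} [Group G] (H : Subgroup G) [H.Normal] [H.FiniteIndex]
    (hab : ∀ x ∈ H, ∀ y ∈ H, x * y = y * x)
    (U : Set G) (hU : ∀ g : G, ∃! u, u ∈ U ∧ g * u⁻¹ ∈ H)
    (g h u : G) (hh : h ∈ H) (hu : u ∈ U) (hg : g = h * u) :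
    conjClass g =
      ⋃ v ∈ U, (fun c => c * (v * g * v⁻¹)) '' {c : G | ∃ y ∈ H, c = ⁅y, v * u * v⁻¹⁆} := by
  subst hg
  ext x
  simp only [conjClass, Set.mem_setOf_eq, Set.mem_iUnion, Set.mem_image]
  constructor
  · rintro ⟨y, rfl⟩
    obtain ⟨v, ⟨hv, hk⟩, _⟩ := hU y
    refine ⟨v, hv, ⁅y * v⁻¹, v * u * v⁻¹⁆, ⟨y * v⁻¹, hk, rfl⟩, ?_⟩
    have ha : v * h * v⁻¹ ∈ H := Subgroup.Normal.conj_mem ‹H.Normal› h hh v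
    have : ⁅y * v⁻¹, (v * h * v⁻¹) * (v * u * v⁻¹)⁆ = ⁅y * v⁻¹, v * u * v⁻¹⁆ :=
      key_comm H hab hk ha _
    have h2 : (v * h * v⁻¹) * (v * u * v⁻¹) = v * (h * u) * v⁻¹ := by group
    rw [← this, h2]
    simp only [commutatorElement_def]; group
  · rintro ⟨v, hv, c, ⟨y, hy, rfl⟩, rfl⟩
    refine ⟨y * v, ?_⟩
    have ha : v * h * v⁻¹ ∈ H := Subgroup.Normal.conj_mem ‹H.Normal› h hh v
    have : ⁅y, (v * h * v⁻¹) * (v * u * v⁻¹)⁆ = ⁅y, v * u * v⁻¹⁆ := key_comm H hab hy ha _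
    rw [← this]
    simp only [commutatorElement_def]; group
end

section
/- The growth function of the free abelian group ℤ^r with respect to any finite generating set is equivalent to the polynomial n^r, for every positive integer r. -/
/-- Word length over `S ∪ (-S)` in an additive group. -/
noncomputable def addWordLength {M : Type*} [AddGroup M] (S : Set M) (g : M) : ℕ :=
  sInf {n | ∃ w : List M, (∀ x ∈ w, x ∈ S ∨ -x ∈ S) ∧ w.sum = g ∧ w.length = n}

section aux
variable {M : Type*} [AddCommGroup M] {S : Set M}

lemma awl_exists_word (hS : AddSubgroup.closure S = ⊤) (g : M) :
    ∃ w : List M, (∀ x ∈ w, x ∈ S ∨ -x ∈ S) ∧ w.sum = g := by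
  have hg : g ∈ (AddSubgroup.closure S).toAddSubmonoid := by
    rw [hS]; trivial
  rw [AddSubgroup.closure_toAddSubmonoid] at hg
  obtain ⟨l, hl, hsum⟩ := AddSubmonoid.exists_list_of_mem_closure hg
  refine ⟨l, fun x hx => ?_, hsum⟩
  rcases hl x hx with h | h
  · exact Or.inl h
  · exact Or.inr (by simpa using h)

lemma awl_spec (hS : AddSubgroup.closure S = ⊤) (g : M) :
    ∃ w : List M, (∀ x ∈ w, x ∈ S ∨ -x ∈ S) ∧ w.sum = g ∧
      w.length = addWordLength S g := by
  obtain ⟨w, hw, hsum⟩ := awl_exists_word hS g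
  have hne : {n | ∃ w : List M, (∀ x ∈ w, x ∈ S ∨ -x ∈ S) ∧ w.sum = g ∧ w.length = n}.Nonempty :=
    ⟨w.length, w, hw, hsum, rfl⟩
  exact Nat.sInf_mem hne

lemma awl_le {g : M} {w : List M} (hw : ∀ x ∈ w, x ∈ S ∨ -x ∈ S) (hsum : w.sum = g) :
    addWordLength S g ≤ w.length :=
  Nat.sInf_le ⟨w, hw, hsum, rfl⟩

lemma awl_zero : addWordLength S 0 = 0 :=
  Nat.le_zero.mp (awl_le (w := []) (by simp) (by simp))

lemma awl_add (hS : AddSubgroup.closure S = ⊤) (g h : M) :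
    addWordLength S (g + h) ≤ addWordLength S g + addWordLength S h := by
  obtain ⟨w₁, hw₁, hs₁, hl₁⟩ := awl_spec hS g
  obtain ⟨w₂, hw₂, hs₂, hl₂⟩ := awl_spec hS h
  have := awl_le (g := g + h) (w := w₁ ++ w₂)
    (fun x hx => by rcases List.mem_append.mp hx with h | h; exacts [hw₁ x h, hw₂ x h])
    (by rw [List.sum_append, hs₁, hs₂])
  simpa [hl₁, hl₂] using this

lemma awl_neg (hS : AddSubgroup.closure S = ⊤) (g : M) :
    addWordLength S (-g) ≤ addWordLength S g := by
  obtain ⟨w, hw, hs, hl⟩ := awl_spec hS g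
  have key : ∀ v : List M, (v.map Neg.neg).sum = -v.sum := by
    intro v
    induction v with
    | nil => simp
    | cons a t ih => simp [ih, neg_add, add_comm]
  have hsum : (w.map Neg.neg).sum = -g := by rw [key, hs]
  have := awl_le (w := w.map Neg.neg)
    (fun x hx => by
      obtain ⟨y, hy, rfl⟩ := List.mem_map.mp hx
      rcases hw y hy with h | h
      · exact Or.inr (by simpa using h)
      · exact Or.inl (by simpa using h)) hsum
  simpa [hl] using this

lemma awl_nsmul (hS : AddSubgroup.closure S = ⊤) (k : ℕ) (g : M) :
    addWordLength S (k • g) ≤ k * addWordLength S g := by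
  induction k with
  | zero => simp [awl_zero]
  | succ n ih =>
      calc addWordLength S ((n + 1) • g) = addWordLength S (n • g + g) := by
            rw [succ_nsmul]
        _ ≤ addWordLength S (n • g) + addWordLength S g := awl_add hS _ _
        _ ≤ n * addWordLength S g + addWordLength S g := by omega
        _ = (n + 1) * addWordLength S g := by ring

lemma awl_zsmul (hS : AddSubgroup.closure S = ⊤) (k : ℤ) (g : M) :
    addWordLength S (k • g) ≤ k.natAbs * addWordLength S g := by
  rcases Int.natAbs_eq k with h | h
  · rw [h, natCast_zsmul]; exact awl_nsmul hS _ g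
  · calc addWordLength S (k • g) = addWordLength S (-((k.natAbs : ℤ) • g)) := by
          rw [← neg_zsmul, ← h]
      _ ≤ addWordLength S ((k.natAbs : ℤ) • g) := awl_neg hS _
      _ ≤ k.natAbs * addWordLength S g := by rw [natCast_zsmul]; exact awl_nsmul hS _ g

lemma awl_sum (hS : AddSubgroup.closure S = ⊤) {ι : Type*} (s : Finset ι) (f : ι → M) :
    addWordLength S (∑ i ∈ s, f i) ≤ ∑ i ∈ s, addWordLength S (f i) := by
  classical
  induction s using Finset.cons_induction with
  | empty => simp [awl_zero]
  | cons a s ha ih =>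
      rw [Finset.sum_cons, Finset.sum_cons]
      exact (awl_add hS _ _).trans (by omega)

end aux

/-- the growth function of `ℤ^r` is equivalent to `n^r`. -/
theorem stmt_11 (r : ℕ) (hr : 0 < r) (S : Finset (Fin r → ℤ))
    (hS : AddSubgroup.closure (S : Set (Fin r → ℤ)) = ⊤) :
    GrowthEquiv
      (fun n => Set.ncard {g : Fin r → ℤ | addWordLength (S : Set (Fin r → ℤ)) g ≤ n})
      (fun n => n ^ r) := by
  classical
  obtain ⟨C, hCs⟩ : ∃ C : ℕ, ∀ s ∈ S, ∀ i, (s i).natAbs ≤ C :=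
    ⟨S.sup (fun s => Finset.univ.sup fun i => (s i).natAbs), fun s hs i =>
      le_trans (Finset.le_sup (f := fun i => (s i).natAbs) (Finset.mem_univ i))
        (Finset.le_sup (f := fun s => Finset.univ.sup fun i => (s i).natAbs) hs)⟩
  have coordb : ∀ w : List (Fin r → ℤ),
      (∀ x ∈ w, x ∈ (S : Set (Fin r → ℤ)) ∨ -x ∈ (S : Set (Fin r → ℤ))) →
      ∀ i, (w.sum i).natAbs ≤ w.length * C := by
    intro w
    induction w with
    | nil => intro _ i; simp
    | cons a t ih =>
        intro hw i
        have ha : (a i).natAbs ≤ C := by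
          rcases hw a List.mem_cons_self with h | h
          · exact hCs a h i
          · simpa using hCs _ h i
        have h2 := ih (fun x hx => hw x (List.mem_cons_of_mem a hx)) i
        have h3 : ((a :: t).sum i).natAbs = (a i + t.sum i).natAbs := by simp
        have h4 := Int.natAbs_add_le (a i) (t.sum i)
        simp only [List.length_cons]
        calc ((a :: t).sum i).natAbs ≤ (a i).natAbs + (t.sum i).natAbs := by rw [h3]; exact h4
          _ ≤ C + t.length * C := by omega
          _ ≤ (t.length + 1) * C := by ring_nf; omega
  have ball_sub : ∀ n : ℕ, {g : Fin r → ℤ | (addWordLength (↑S : Set (Fin r → ℤ))) g ≤ n} ⊆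
      ↑(Finset.Icc (fun _ => -((C * n : ℕ) : ℤ)) (fun _ => ((C * n : ℕ) : ℤ)) : Finset (Fin r → ℤ)) := by
    intro n g hg
    obtain ⟨w, hw, hsum, hlen⟩ := awl_spec hS g
    have hwl : w.length ≤ n := by rw [hlen]; exact hg
    simp only [Finset.coe_Icc, Set.mem_Icc, Pi.le_def]
    constructor
    all_goals (
      intro i
      have h1 : (g i).natAbs ≤ C * n := by
        have h2 := coordb w hw i
        rw [hsum] at h2
        calc (g i).natAbs ≤ w.length * C := h2
          _ ≤ n * C := Nat.mul_le_mul_right C hwl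
          _ = C * n := Nat.mul_comm n C
      omega)
  have ball_fin : ∀ n : ℕ, {g : Fin r → ℤ | (addWordLength (↑S : Set (Fin r → ℤ))) g ≤ n}.Finite :=
    fun n => Set.Finite.subset (Finset.finite_toSet _) (ball_sub n)
  have card_ball : ∀ n, Set.ncard {g : Fin r → ℤ | (addWordLength (↑S : Set (Fin r → ℤ))) g ≤ n} ≤ (2 * (C * n) + 1) ^ r := by
    intro n
    have h := Set.ncard_le_ncard (ball_sub n) (Finset.finite_toSet _)
    rw [Set.ncard_coe_finset] at h
    refine h.trans ?_
    rw [Pi.card_Icc]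
    simp only [Int.card_Icc]
    rw [Finset.prod_const, Finset.card_univ, Fintype.card_fin]
    have : (((C * n : ℕ) : ℤ) + 1 - -((C * n : ℕ) : ℤ)).toNat = 2 * (C * n) + 1 := by omega
    rw [this]
  constructor
  · -- β ≼ n^r
    refine ⟨2 * C + 1, by omega, fun n => ?_⟩
    have h1 : (2 * (C * n) + 1) ≤ (2 * C + 1) * n + (2 * C + 1) := by ring_nf; omega
    calc Set.ncard {g : Fin r → ℤ | (addWordLength (↑S : Set (Fin r → ℤ))) g ≤ n} ≤ (2 * (C * n) + 1) ^ r := card_ball n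
      _ ≤ ((2 * C + 1) * n + (2 * C + 1)) ^ r := Nat.pow_le_pow_left h1 r
      _ ≤ (2 * C + 1) * ((2 * C + 1) * n + (2 * C + 1)) ^ r + (2 * C + 1) := by
          have := Nat.le_mul_of_pos_left (((2 * C + 1) * n + (2 * C + 1)) ^ r)
            (show 0 < 2 * C + 1 by omega)
          omega
  · -- n^r ≼ β
    obtain ⟨D, hD1, hD⟩ : ∃ D : ℕ, 1 ≤ D ∧ ∀ i : Fin r, (addWordLength (↑S : Set (Fin r → ℤ))) (Pi.single i 1) ≤ D :=
      ⟨1 + Finset.univ.sup (fun i : Fin r => (addWordLength (↑S : Set (Fin r → ℤ))) (Pi.single i 1)), by omega, fun i =>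
        le_trans (Finset.le_sup (f := fun i : Fin r => (addWordLength (↑S : Set (Fin r → ℤ))) (Pi.single i 1)) (Finset.mem_univ i))
          (by omega)⟩
    have decomp : ∀ g : Fin r → ℤ, g = ∑ i, g i • Pi.single i (1 : ℤ) := by
      intro g
      funext j
      rw [Finset.sum_apply]
      simp [Pi.single_apply]
    have Lbound : ∀ g : Fin r → ℤ, (addWordLength (↑S : Set (Fin r → ℤ))) g ≤ ∑ i, (g i).natAbs * D := by
      intro g
      have h1 := awl_sum hS Finset.univ (fun i => g i • Pi.single i (1 : ℤ))
      rw [← decomp g] at h1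
      refine h1.trans (Finset.sum_le_sum fun i _ => ?_)
      have h := awl_zsmul hS (g i) (Pi.single i (1 : ℤ))
      rw [← Int.cast_smul_eq_zsmul ℤ, Int.cast_id] at h
      exact le_trans h (Nat.mul_le_mul_left _ (hD i))
    refine ⟨r * D + 1, by omega, fun n => ?_⟩
    set l := r * D + 1 with hldef
    set B : Finset (Fin r → ℤ) := Finset.Icc (0 : Fin r → ℤ) (fun _ => (n : ℤ) - 1) with hBdef
    have hBcard : B.card = n ^ r := by
      rw [hBdef, Pi.card_Icc]
      simp only [Int.card_Icc, Pi.zero_apply]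
      rw [Finset.prod_const, Finset.card_univ, Fintype.card_fin]
      congr 1
      omega
    have hBsub : ↑B ⊆ {g : Fin r → ℤ | (addWordLength (↑S : Set (Fin r → ℤ))) g ≤ l * n + l} := by
      intro g hg
      simp only [hBdef, Finset.coe_Icc, Set.mem_Icc, Pi.le_def, Pi.zero_apply] at hg
      have hgi : ∀ i, (g i).natAbs ≤ n := by
        intro i
        have := hg.1 i
        have := hg.2 i
        omega
      have : (addWordLength (↑S : Set (Fin r → ℤ))) g ≤ ∑ i : Fin r, n * D :=
        (Lbound g).trans (Finset.sum_le_sum fun i _ => Nat.mul_le_mul_right D (hgi i))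
      simp only [Finset.sum_const, Finset.card_univ, Fintype.card_fin, smul_eq_mul] at this
      have : (addWordLength (↑S : Set (Fin r → ℤ))) g ≤ r * D * n := by
        calc (addWordLength (↑S : Set (Fin r → ℤ))) g ≤ r * (n * D) := this
          _ = r * D * n := by ring
      simp only [hldef]
      calc (addWordLength (↑S : Set (Fin r → ℤ))) g ≤ r * D * n := this
        _ ≤ (r * D + 1) * n + (r * D + 1) := by ring_nf; omega
    calc n ^ r = B.card := hBcard.symm
      _ = Set.ncard (↑B : Set (Fin r → ℤ)) := (Set.ncard_coe_finset B).symm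
      _ ≤ Set.ncard {g : Fin r → ℤ | (addWordLength (↑S : Set (Fin r → ℤ))) g ≤ l * n + l} :=
          Set.ncard_le_ncard hBsub (ball_fin _)
      _ ≤ l * Set.ncard {g : Fin r → ℤ | (addWordLength (↑S : Set (Fin r → ℤ))) g ≤ l * n + l} + l := by
          have := Nat.le_mul_of_pos_left (Set.ncard {g : Fin r → ℤ | (addWordLength (↑S : Set (Fin r → ℤ))) g ≤ l * n + l})
            (show 0 < l by omega)
          omega
end

section
/- For every d ∈ ℕ there exists a finitely generated virtually abelian group G such that for every natural number c ≤ d, G has a conjugacy class whose growth function in G is equivalent to n^c. Concretely, in G = ℤ^d ⋊ (C₂)^d, where the i-th copy of C₂ acts by negating the i-th coordinate of ℤ^d, the conjugacy class of the element s₁s₂⋯s_c (the product of the first c involutions) equals the coset ⟨t₁², …, t_c²⟩·s₁⋯s_c and has growth equivalent to n^c. -/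
variable {G : Type*} [Group G]

/-- The automorphism of `ℤ^d` (written multiplicatively) given by coordinatewise
multiplication by a vector of signs `s : (ℤˣ)^d`. -/
def signAut (d : ℕ) (s : Fin d → ℤˣ) :
    Multiplicative (Fin d → ℤ) ≃* Multiplicative (Fin d → ℤ) where
  toFun t := Multiplicative.ofAdd fun i => (s i : ℤ) * (Multiplicative.toAdd t) i
  invFun t := Multiplicative.ofAdd fun i => (s i : ℤ) * (Multiplicative.toAdd t) i
  left_inv t := by
    apply Multiplicative.toAdd.injective
    funext i
    simp [← mul_assoc, Int.units_mul_self]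
  right_inv t := by
    apply Multiplicative.toAdd.injective
    funext i
    simp [← mul_assoc, Int.units_mul_self]
  map_mul' t t' := by
    apply Multiplicative.toAdd.injective
    funext i
    simp [mul_add]

/-- The action of `(C₂)^d ≅ (ℤˣ)^d` on `ℤ^d` by coordinatewise sign changes. -/
def signAction (d : ℕ) : (Fin d → ℤˣ) →* MulAut (Multiplicative (Fin d → ℤ)) where
  toFun s := signAut d s
  map_one' := by
    ext t : 1
    apply Multiplicative.toAdd.injective
    funext i
    simp [signAut]
  map_mul' s s' := by
    ext t : 1
    apply Multiplicative.toAdd.injective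
    funext i
    simp [signAut, mul_assoc]

/-- The group `G = ℤ^d ⋊ (C₂)^d`, the i-th involution negating the i-th coordinate. -/
abbrev SdGroup (d : ℕ) := SemidirectProduct (Multiplicative (Fin d → ℤ)) (Fin d → ℤˣ)
  (signAction d)

lemma wordLength_le {S : Set G} {g : G} {n : ℕ} (w : List G)
    (hw : ∀ x ∈ w, x ∈ S ∨ x⁻¹ ∈ S) (hp : w.prod = g) (hl : w.length ≤ n) :
    wordLength S g ≤ n :=
  le_trans (Nat.sInf_le ⟨w, hw, hp, rfl⟩) hl

lemma exists_word {S : Set G} (hS : Subgroup.closure S = ⊤) (g : G) :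
    ∃ w : List G, (∀ x ∈ w, x ∈ S ∨ x⁻¹ ∈ S) ∧ w.prod = g ∧ w.length = wordLength S g := by
  have hg : g ∈ Submonoid.closure (S ∪ S⁻¹) := by
    rw [← Subgroup.closure_toSubmonoid, hS]; trivial
  obtain ⟨l, hl, hp⟩ := Submonoid.exists_list_of_mem_closure hg
  have : {n | ∃ w : List G, (∀ x ∈ w, x ∈ S ∨ x⁻¹ ∈ S) ∧ w.prod = g ∧ w.length = n}.Nonempty := by
    refine ⟨l.length, l, fun x hx => ?_, hp, rfl⟩
    rcases hl x hx with h | h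
    · exact Or.inl h
    · exact Or.inr h
  exact Nat.sInf_mem this

lemma wordLength_one (S : Set G) : wordLength S (1 : G) = 0 :=
  Nat.le_zero.mp (wordLength_le [] (by simp) (by simp) (by simp))

lemma wordLength_mul_le {S : Set G} (hS : Subgroup.closure S = ⊤) (g h : G) :
    wordLength S (g * h) ≤ wordLength S g + wordLength S h := by
  obtain ⟨w1, hw1, hp1, hl1⟩ := exists_word hS g
  obtain ⟨w2, hw2, hp2, hl2⟩ := exists_word hS h
  refine wordLength_le (w1 ++ w2) ?_ (by simp [hp1, hp2]) (by simp [hl1, hl2])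
  intro x hx
  rcases List.mem_append.mp hx with h | h
  · exact hw1 x h
  · exact hw2 x h

lemma wordLength_inv (S : Set G) (g : G) : wordLength S g⁻¹ = wordLength S g := by
  have key : ∀ h : G, ∀ n, (∃ w : List G, (∀ x ∈ w, x ∈ S ∨ x⁻¹ ∈ S) ∧ w.prod = h ∧ w.length = n) →
      (∃ w : List G, (∀ x ∈ w, x ∈ S ∨ x⁻¹ ∈ S) ∧ w.prod = h⁻¹ ∧ w.length = n) := by
    rintro h n ⟨w, hw, hp, hl⟩
    refine ⟨(w.reverse.map (·⁻¹)), ?_, ?_, by simp [hl]⟩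
    · intro x hx
      simp only [List.mem_map, List.mem_reverse] at hx
      obtain ⟨y, hy, rfl⟩ := hx
      rcases hw y hy with h' | h'
      · exact Or.inr (by simpa using h')
      · exact Or.inl h'
    · rw [← hp]
      simp [List.prod_inv_reverse w, List.map_reverse]
  unfold wordLength
  congr 1
  ext n
  constructor
  · intro hn; simpa using key g⁻¹ n hn
  · exact key g n

lemma wordLength_list_prod_le {S : Set G} (hS : Subgroup.closure S = ⊤) (w : List G) :
    wordLength S w.prod ≤ (w.map (wordLength S)).sum := by
  induction w with
  | nil => simp [wordLength_one]
  | cons a w ih =>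
    simp only [List.prod_cons, List.map_cons, List.sum_cons]
    exact le_trans (wordLength_mul_le hS a w.prod) (by omega)

lemma wordLength_le_mul {S T : Set G} (hS : Subgroup.closure S = ⊤) (hT : Subgroup.closure T = ⊤)
    {K : ℕ} (hK : ∀ x ∈ S, wordLength T x ≤ K) (g : G) :
    wordLength T g ≤ K * wordLength S g := by
  obtain ⟨w, hw, hp, hl⟩ := exists_word hS g
  calc wordLength T g = wordLength T w.prod := by rw [hp]
    _ ≤ (w.map (wordLength T)).sum := wordLength_list_prod_le hT w
    _ ≤ K * w.length := by
        rw [mul_comm]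
        have := List.sum_le_card_nsmul (w.map (wordLength T)) K ?_
        · simpa using this
        · intro x hx
          simp only [List.mem_map] at hx
          obtain ⟨y, hy, rfl⟩ := hx
          rcases hw y hy with h' | h'
          · exact hK y h'
          · rw [← wordLength_inv T y]; exact hK y⁻¹ h'
    _ = K * wordLength S g := by rw [hl]

lemma wordLength_single_le {S : Set G} {x : G} (hx : x ∈ S) : wordLength S x ≤ 1 :=
  wordLength_le [x] (by simpa using Or.inl hx) (by simp) (by simp)

lemma wordLength_zpow_le {S : Set G} {x : G} (hx : x ∈ S) (k : ℤ) :
    wordLength S (x ^ k) ≤ k.natAbs := by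
  rcases Int.natAbs_eq k with h | h
  · refine wordLength_le (List.replicate k.natAbs x) ?_ ?_ (by simp)
    · intro y hy; rw [List.eq_of_mem_replicate hy]; exact Or.inl hx
    · rw [List.prod_replicate]
      conv_rhs => rw [h, zpow_natCast]
  · refine wordLength_le (List.replicate k.natAbs x⁻¹) ?_ ?_ (by simp)
    · intro y hy; rw [List.eq_of_mem_replicate hy]; exact Or.inr (by simpa using hx)
    · rw [List.prod_replicate]
      conv_rhs => rw [h]
      rw [zpow_neg, inv_pow, zpow_natCast]

lemma growth_le_growth {S S' : Set G} {U : Set G} {K n m : ℕ}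
    (h : ∀ g : G, wordLength S' g ≤ K * wordLength S g) (hnm : K * n ≤ m)
    (hfin : {g ∈ U | wordLength S' g ≤ m}.Finite) :
    growth S U n ≤ growth S' U m := by
  apply Set.ncard_le_ncard _ hfin
  rintro g ⟨hgU, hgl⟩
  exact ⟨hgU, le_trans (h g) (le_trans (Nat.mul_le_mul_left K hgl) hnm)⟩

section Specific

variable {d : ℕ}

open SemidirectProduct Multiplicative

/-- The `i`-th translation generator. -/
def tg (d : ℕ) (i : Fin d) : SdGroup d := inl (ofAdd (Pi.single i 1))

/-- The `i`-th sign-flip generator. -/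
def sg (d : ℕ) (i : Fin d) : SdGroup d := inr (Pi.mulSingle i (-1))

/-- The standard generating set. -/
noncomputable def Tgen (d : ℕ) : Finset (SdGroup d) :=
  letI := Classical.decEq (SdGroup d)
  (Finset.univ.image (tg d)) ∪ (Finset.univ.image (sg d))

lemma tg_mem (i : Fin d) : tg d i ∈ (Tgen d : Set (SdGroup d)) := by
  classical
  simp only [Tgen, Finset.coe_union, Finset.coe_image, Finset.coe_univ, Set.image_univ,
    Set.mem_union, Set.mem_range]
  exact Or.inl ⟨i, rfl⟩

lemma sg_mem (i : Fin d) : sg d i ∈ (Tgen d : Set (SdGroup d)) := by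
  classical
  simp only [Tgen, Finset.coe_union, Finset.coe_image, Finset.coe_univ, Set.image_univ,
    Set.mem_union, Set.mem_range]
  exact Or.inr ⟨i, rfl⟩

lemma tg_zpow (i : Fin d) (k : ℤ) :
    (tg d i) ^ k = inl (ofAdd (Pi.single i k)) := by
  rw [tg, ← map_zpow]
  congr 1
  apply Multiplicative.toAdd.injective
  rw [toAdd_zpow]
  simp only [toAdd_ofAdd]
  funext j
  by_cases h : j = i
  · subst h; simp
  · simp [Pi.single_eq_of_ne h]

lemma prod_tg (v : Fin d → ℤ) :
    (List.ofFn (fun i => (tg d i) ^ (v i))).prod = inl (ofAdd v) := by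
  have : (fun i => (tg d i) ^ (v i)) = (inl ∘ fun i => ofAdd (Pi.single i (v i))) := by
    funext i; exact tg_zpow i (v i)
  rw [this, ← List.map_ofFn, ← map_list_prod, List.prod_ofFn, ← ofAdd_sum,
    Finset.univ_sum_single]

lemma prod_sg (σ : Fin d → ℤˣ) :
    (List.ofFn (fun i => (inr (Pi.mulSingle i (σ i)) : SdGroup d))).prod = inr σ := by
  rw [show (fun i => (inr (Pi.mulSingle i (σ i)) : SdGroup d))
      = (inr ∘ fun i => Pi.mulSingle i (σ i)) from rfl,
    ← List.map_ofFn, ← map_list_prod, List.prod_ofFn, Finset.univ_prod_mulSingle]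

lemma Tgen_closure : Subgroup.closure (Tgen d : Set (SdGroup d)) = ⊤ := by
  rw [eq_top_iff]
  rintro g -
  have hmem : ∀ x ∈ (Tgen d : Set (SdGroup d)), x ∈ Subgroup.closure (Tgen d : Set (SdGroup d)) :=
    fun x hx => Subgroup.subset_closure hx
  rw [← inl_left_mul_inr_right g]
  apply mul_mem
  · rw [← ofAdd_toAdd g.left, ← prod_tg (toAdd g.left)]
    apply list_prod_mem
    intro x hx
    simp only [List.mem_ofFn] at hx
    obtain ⟨i, rfl⟩ := hx
    exact zpow_mem (hmem _ (tg_mem i)) _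
  · rw [← prod_sg g.right]
    apply list_prod_mem
    intro x hx
    simp only [List.mem_ofFn] at hx
    obtain ⟨i, rfl⟩ := hx
    rcases Int.units_eq_one_or (g.right i) with h | h
    · rw [h]; simp only [Pi.mulSingle_one, map_one]; exact one_mem _
    · rw [h]; exact hmem _ (sg_mem i)

lemma letter_bound {x : SdGroup d} (hx : x ∈ (Tgen d : Set (SdGroup d)) ∨
    x⁻¹ ∈ (Tgen d : Set (SdGroup d))) (i : Fin d) :
    (Multiplicative.toAdd x.left i).natAbs ≤ 1 := by
  have base : ∀ y : SdGroup d, y ∈ (Tgen d : Set (SdGroup d)) →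
      ∀ i : Fin d, (Multiplicative.toAdd y.left i).natAbs ≤ 1 := by
    classical
    intro y hy i
    simp only [Tgen, Finset.coe_union, Finset.coe_image, Finset.coe_univ, Set.image_univ,
      Set.mem_union, Set.mem_range] at hy
    rcases hy with ⟨j, rfl⟩ | ⟨j, rfl⟩
    · simp only [tg, left_inl, toAdd_ofAdd]
      rcases eq_or_ne i j with h | h
      · subst h; simp
      · rw [Pi.single_eq_of_ne h]; simp
    · simp [sg]
  rcases hx with h | h
  · exact base x h i
  · have := base x⁻¹ h i
    rw [inv_left] at this
    simpa [signAut, signAction, Int.natAbs_mul] using this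

lemma word_bound (w : List (SdGroup d))
    (hw : ∀ x ∈ w, x ∈ (Tgen d : Set (SdGroup d)) ∨ x⁻¹ ∈ (Tgen d : Set (SdGroup d)))
    (i : Fin d) : (Multiplicative.toAdd w.prod.left i).natAbs ≤ w.length := by
  induction w with
  | nil => simp
  | cons a w ih =>
    have ha := letter_bound (hw a (by simp)) i
    have ihw := ih (fun x hx => hw x (by simp [hx]))
    rw [List.prod_cons, mul_left]
    have : (Multiplicative.toAdd (a.left * (signAction d a.right) w.prod.left) i).natAbs
        ≤ (Multiplicative.toAdd a.left i).natAbs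
          + (Multiplicative.toAdd w.prod.left i).natAbs := by
      simp only [toAdd_mul, Pi.add_apply]
      refine le_trans (Int.natAbs_add_le _ _) ?_
      simp [signAction, signAut, Int.natAbs_mul]
    simp only [List.length_cons]
    omega

lemma natAbs_le_wordLength (g : SdGroup d) (i : Fin d) :
    (Multiplicative.toAdd g.left i).natAbs ≤ wordLength (Tgen d : Set (SdGroup d)) g := by
  obtain ⟨w, hw, hp, hl⟩ := exists_word Tgen_closure g
  rw [← hl, ← hp]
  exact word_bound w hw i

lemma ball_finite (n : ℕ) :
    {g : SdGroup d | wordLength (Tgen d : Set (SdGroup d)) g ≤ n}.Finite := by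
  classical
  have hsub : {g : SdGroup d | wordLength (Tgen d : Set (SdGroup d)) g ≤ n} ⊆
      (fun g : SdGroup d => (Multiplicative.toAdd g.left, g.right)) ⁻¹'
        ((↑(Fintype.piFinset fun _ : Fin d => Finset.Icc (-(n:ℤ)) (n:ℤ)) : Set (Fin d → ℤ))
          ×ˢ (Set.univ : Set (Fin d → ℤˣ))) := by
    intro g hg
    simp only [Set.mem_preimage, Set.mem_prod, Set.mem_univ, and_true, Finset.coe_sort_coe,
      Finset.mem_coe, Fintype.mem_piFinset, Finset.mem_Icc]
    intro i
    have := le_trans (natAbs_le_wordLength g i) hg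
    omega
  refine Set.Finite.subset (Set.Finite.preimage ?_ ?_) hsub
  · intro a _ b _ hab
    simp only [Prod.mk.injEq] at hab
    exact SemidirectProduct.ext (Multiplicative.toAdd.injective hab.1) hab.2
  · exact Set.Finite.prod (Finset.finite_toSet _) (Set.finite_univ)

lemma wordLength_upper (v : Fin d → ℤ) (σ : Fin d → ℤˣ) :
    wordLength (Tgen d : Set (SdGroup d)) (⟨ofAdd v, σ⟩ : SdGroup d)
      ≤ (∑ i, (v i).natAbs) + d := by
  have hdecomp : (⟨ofAdd v, σ⟩ : SdGroup d) = inl (ofAdd v) * inr σ := by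
    apply SemidirectProduct.ext <;> simp
  rw [hdecomp]
  refine le_trans (wordLength_mul_le Tgen_closure _ _) (Nat.add_le_add ?_ ?_)
  · rw [← prod_tg v]
    refine le_trans (wordLength_list_prod_le Tgen_closure _) ?_
    rw [List.map_ofFn, List.sum_ofFn]
    exact Finset.sum_le_sum fun i _ => wordLength_zpow_le (tg_mem i) (v i)
  · rw [← prod_sg σ]
    refine le_trans (wordLength_list_prod_le Tgen_closure _) ?_
    rw [List.map_ofFn, List.sum_ofFn]
    calc ∑ i : Fin d, wordLength (Tgen d : Set (SdGroup d)) (inr (Pi.mulSingle i (σ i)))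
        ≤ ∑ _i : Fin d, 1 := by
          refine Finset.sum_le_sum fun i _ => ?_
          rcases Int.units_eq_one_or (σ i) with h | h
          · rw [h]
            simp only [Pi.mulSingle_one, map_one]
            rw [wordLength_one]
            omega
          · rw [h]
            exact wordLength_single_le (sg_mem i)
      _ = d := by simp

lemma signAction_apply (s : Fin d → ℤˣ) (t : Multiplicative (Fin d → ℤ)) (i : Fin d) :
    Multiplicative.toAdd ((signAction d s) t) i = (s i : ℤ) * Multiplicative.toAdd t i := rfl

lemma conj_right (y : SdGroup d) (σ : Fin d → ℤˣ) :
    (y * (⟨1, σ⟩ : SdGroup d) * y⁻¹).right = σ := by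
  simp only [mul_right, inv_right]
  rw [mul_comm y.right σ, mul_inv_cancel_right]

lemma conj_left (y : SdGroup d) (σ : Fin d → ℤˣ) (i : Fin d) :
    Multiplicative.toAdd (y * (⟨1, σ⟩ : SdGroup d) * y⁻¹).left i
      = Multiplicative.toAdd y.left i - (σ i : ℤ) * Multiplicative.toAdd y.left i := by
  simp only [mul_left, inv_left, mul_right, inv_right]
  simp only [toAdd_mul, Pi.add_apply, signAction_apply]
  simp only [toAdd_one, Pi.zero_apply, mul_zero, add_zero, toAdd_inv, Pi.neg_apply,
    Pi.mul_apply, Pi.inv_apply, Units.val_mul]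
  rcases Int.units_eq_one_or (y.right i) with h | h <;> rw [h] <;> simp <;> ring

lemma conjClass_eq (c : ℕ) (hc : c ≤ d) :
    conjClass (⟨1, fun i : Fin d => if (i : ℕ) < c then (-1 : ℤˣ) else 1⟩ : SdGroup d) =
      {g : SdGroup d |
        (∀ i : Fin d, (i : ℕ) < c → (2 : ℤ) ∣ Multiplicative.toAdd g.left i) ∧
        (∀ i : Fin d, c ≤ (i : ℕ) → Multiplicative.toAdd g.left i = 0) ∧
        g.right = fun i : Fin d => if (i : ℕ) < c then (-1 : ℤˣ) else 1} := by
  ext g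
  constructor
  · rintro ⟨y, rfl⟩
    refine ⟨fun i hi => ?_, fun i hi => ?_, conj_right y _⟩
    · rw [conj_left]
      simp only [if_pos hi, Units.val_neg, Units.val_one]
      exact ⟨Multiplicative.toAdd y.left i, by ring⟩
    · rw [conj_left]
      simp [if_neg (Nat.not_lt.mpr hi)]
  · rintro ⟨h1, h2, h3⟩
    refine ⟨⟨ofAdd (fun i => Multiplicative.toAdd g.left i / 2), 1⟩, ?_⟩
    symm
    apply SemidirectProduct.ext
    · apply Multiplicative.toAdd.injective
      funext i
      rw [conj_left]
      simp only [toAdd_ofAdd]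
      by_cases hi : (i : ℕ) < c
      · simp only [if_pos hi, Units.val_neg, Units.val_one]
        have := h1 i hi
        omega
      · simp only [if_neg hi, Units.val_one, one_mul, sub_self]
        exact (h2 i (Nat.le_of_not_lt hi)).symm
    · rw [conj_right, h3]

end Specific


/-- in `G = ℤ^d ⋊ (C₂)^d`, for every `c ≤ d` the conjugacy class of
`s₁s₂⋯s_c` is the coset `⟨t₁²,…,t_c²⟩ s₁⋯s_c` and has growth equivalent to `n^c`. -/
theorem stmt_13 (d c : ℕ) (hc : c ≤ d)
    (S : Finset (SdGroup d)) (hS : Subgroup.closure (S : Set (SdGroup d)) = ⊤) :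
    conjClass (⟨1, fun i : Fin d => if (i : ℕ) < c then (-1 : ℤˣ) else 1⟩ : SdGroup d) =
      {g : SdGroup d |
        (∀ i : Fin d, (i : ℕ) < c → (2 : ℤ) ∣ Multiplicative.toAdd g.left i) ∧
        (∀ i : Fin d, c ≤ (i : ℕ) → Multiplicative.toAdd g.left i = 0) ∧
        g.right = fun i : Fin d => if (i : ℕ) < c then (-1 : ℤˣ) else 1} ∧
    GrowthEquiv
      (growth (S : Set (SdGroup d))
        (conjClass (⟨1, fun i : Fin d => if (i : ℕ) < c then (-1 : ℤˣ) else 1⟩ : SdGroup d)))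
      (fun n => n ^ c) := by
  classical
  set σ₀ : Fin d → ℤˣ := (fun i : Fin d => if (i : ℕ) < c then (-1 : ℤˣ) else 1) with hσ₀
  set U : Set (SdGroup d) := conjClass (⟨1, σ₀⟩ : SdGroup d) with hU
  have hconj : U = {g : SdGroup d |
        (∀ i : Fin d, (i : ℕ) < c → (2 : ℤ) ∣ Multiplicative.toAdd g.left i) ∧
        (∀ i : Fin d, c ≤ (i : ℕ) → Multiplicative.toAdd g.left i = 0) ∧
        g.right = σ₀} := conjClass_eq c hc
  -- comparison constants
  set K₁ : ℕ := (S.sup (wordLength (Tgen d : Set (SdGroup d)))) + 1 with hK₁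
  set K₂ : ℕ := ((Tgen d).sup (wordLength (S : Set (SdGroup d)))) + 1 with hK₂
  have h₁ : ∀ g : SdGroup d, wordLength (Tgen d : Set (SdGroup d)) g
      ≤ K₁ * wordLength (S : Set (SdGroup d)) g :=
    wordLength_le_mul hS Tgen_closure
      (fun x hx => le_trans (Finset.le_sup hx) (Nat.le_succ _))
  have h₂ : ∀ g : SdGroup d, wordLength (S : Set (SdGroup d)) g
      ≤ K₂ * wordLength (Tgen d : Set (SdGroup d)) g :=
    wordLength_le_mul Tgen_closure hS
      (fun x hx => le_trans (Finset.le_sup hx) (Nat.le_succ _))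
  have Tfin : ∀ m : ℕ, {g ∈ U | wordLength (Tgen d : Set (SdGroup d)) g ≤ m}.Finite :=
    fun m => (ball_finite m).subset (fun g hg => hg.2)
  have Sfin : ∀ m : ℕ, {g ∈ U | wordLength (S : Set (SdGroup d)) g ≤ m}.Finite := by
    intro m
    refine (ball_finite (K₁ * m)).subset (fun g hg => ?_)
    exact le_trans (h₁ g) (Nat.mul_le_mul_left K₁ hg.2)
  -- upper bound for the growth wrt Tgen
  have upper : ∀ n : ℕ, growth (Tgen d : Set (SdGroup d)) U n ≤ (2 * n + 1) ^ c := by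
    intro n
    have hcard : ((Fintype.piFinset fun _ : Fin c => Finset.Icc (-(n:ℤ)) (n:ℤ))).card
        = (2 * n + 1) ^ c := by
      rw [Fintype.card_piFinset]
      have : (Finset.Icc (-(n:ℤ)) (n:ℤ)).card = 2 * n + 1 := by
        rw [Int.card_Icc]; omega
      simp [this]
    rw [growth, ← hcard, ← Set.ncard_coe_finset]
    apply Set.ncard_le_ncard_of_injOn
      (fun g : SdGroup d => fun j : Fin c => Multiplicative.toAdd g.left (Fin.castLE hc j))
    · rintro g ⟨hgU, hgl⟩
      simp only [Finset.mem_coe, Fintype.mem_piFinset, Finset.mem_Icc]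
      intro j
      have := le_trans (natAbs_le_wordLength g (Fin.castLE hc j)) hgl
      omega
    · rintro a ⟨haU, -⟩ b ⟨hbU, -⟩ hab
      rw [hconj] at haU hbU
      apply SemidirectProduct.ext
      · apply Multiplicative.toAdd.injective
        funext i
        by_cases hi : (i : ℕ) < c
        · have h := congrFun hab ⟨(i : ℕ), hi⟩
          have hcast : Fin.castLE hc (⟨(i : ℕ), hi⟩ : Fin c) = i := by
            apply Fin.ext; rfl
          simpa [hcast] using h
        · rw [haU.2.1 i (Nat.le_of_not_lt hi), hbU.2.1 i (Nat.le_of_not_lt hi)]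
      · rw [haU.2.2, hbU.2.2]
  -- lower bound for the growth wrt Tgen
  set B : ℕ := 3 * d + 1 with hB
  have lower : ∀ n : ℕ, n ^ c ≤ growth (Tgen d : Set (SdGroup d)) U (B * n + B) := by
    intro n
    have hcard : ((Fintype.piFinset fun _ : Fin c => Finset.Icc (1:ℤ) (n:ℤ))).card = n ^ c := by
      rw [Fintype.card_piFinset]
      have : (Finset.Icc (1:ℤ) (n:ℤ)).card = n := by
        rw [Int.card_Icc]; omega
      simp [this]
    rw [growth, ← hcard, ← Set.ncard_coe_finset]
    refine Set.ncard_le_ncard_of_injOn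
      (fun a : Fin c → ℤ => (⟨Multiplicative.ofAdd
        (fun i : Fin d => if h : (i : ℕ) < c then 2 * a ⟨(i : ℕ), h⟩ else 0), σ₀⟩ : SdGroup d))
      ?_ ?_ (Tfin _)
    · intro a ha
      simp only [Finset.mem_coe, Fintype.mem_piFinset, Finset.mem_Icc] at ha
      constructor
      · rw [hconj]
        refine ⟨fun i hi => ?_, fun i hi => ?_, rfl⟩
        · simp only [toAdd_ofAdd, dif_pos hi]
          exact ⟨a ⟨(i : ℕ), hi⟩, rfl⟩
        · simp only [toAdd_ofAdd, dif_neg (Nat.not_lt.mpr hi)]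
      · refine le_trans (wordLength_upper _ _) ?_
        have hsum : (∑ i : Fin d, (if h : (i : ℕ) < c then 2 * a ⟨(i : ℕ), h⟩ else 0).natAbs)
            ≤ d * (2 * n) := by
          have hterm : ∀ i ∈ (Finset.univ : Finset (Fin d)),
              (if h : (i : ℕ) < c then 2 * a ⟨(i : ℕ), h⟩ else 0).natAbs ≤ 2 * n := by
            intro i _
            by_cases hi : (i : ℕ) < c
            · rw [dif_pos hi]
              have h1 := (ha ⟨(i : ℕ), hi⟩).1
              have h2 := (ha ⟨(i : ℕ), hi⟩).2
              omega
            · rw [dif_neg hi]; omega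
          have := Finset.sum_le_card_nsmul Finset.univ _ (2 * n) hterm
          simpa [smul_eq_mul] using this
        have hBn : d * (2 * n) + d ≤ B * n + B := by
          rw [hB]
          nlinarith
        omega
    · intro a _ b _ hab
      have hleft := congrArg (fun g : SdGroup d => Multiplicative.toAdd g.left) hab
      funext j
      have h := congrFun hleft (Fin.castLE hc j)
      have hj : ((Fin.castLE hc j : Fin d) : ℕ) < c := by
        simpa using j.isLt
      simpa [dif_pos hj, Fin.ext_iff] using h
  have hK₁1 : 1 ≤ K₁ := Nat.le_add_left 1 _
  have hK₂1 : 1 ≤ K₂ := Nat.le_add_left 1 _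
  refine ⟨hconj.trans (by rw [hσ₀]), ?_, ?_⟩
  · -- growth S U ≼ n ^ c
    refine ⟨2 * K₁ + 1, by omega, fun n => ?_⟩
    have step1 : growth (S : Set (SdGroup d)) U n
        ≤ growth (Tgen d : Set (SdGroup d)) U (K₁ * n) :=
      growth_le_growth h₁ le_rfl (Tfin _)
    have step2 : growth (Tgen d : Set (SdGroup d)) U (K₁ * n) ≤ (2 * (K₁ * n) + 1) ^ c :=
      upper _
    have step3 : (2 * (K₁ * n) + 1) ^ c ≤ ((2 * K₁ + 1) * n + (2 * K₁ + 1)) ^ c := by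
      apply Nat.pow_le_pow_left
      nlinarith
    calc growth (S : Set (SdGroup d)) U n ≤ (2 * (K₁ * n) + 1) ^ c := le_trans step1 step2
      _ ≤ ((2 * K₁ + 1) * n + (2 * K₁ + 1)) ^ c := step3
      _ ≤ (2 * K₁ + 1) * ((2 * K₁ + 1) * n + (2 * K₁ + 1)) ^ c + (2 * K₁ + 1) :=
        le_trans (Nat.le_mul_of_pos_left _ (by omega)) (Nat.le_add_right _ _)
  · -- n ^ c ≼ growth S U
    refine ⟨K₂ * B, Nat.mul_pos hK₂1 (by omega), fun n => ?_⟩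
    have step1 : n ^ c ≤ growth (Tgen d : Set (SdGroup d)) U (B * n + B) := lower n
    have step2 : growth (Tgen d : Set (SdGroup d)) U (B * n + B)
        ≤ growth (S : Set (SdGroup d)) U (K₂ * B * n + K₂ * B) := by
      exact growth_le_growth h₂ (le_of_eq (by ring)) (Sfin _)
    have hKB : 1 ≤ K₂ * B := Nat.mul_pos hK₂1 (by omega)
    calc n ^ c ≤ growth (S : Set (SdGroup d)) U (K₂ * B * n + K₂ * B) := le_trans step1 step2
      _ ≤ K₂ * B * growth (S : Set (SdGroup d)) U (K₂ * B * n + K₂ * B) + K₂ * B :=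
        le_trans (Nat.le_mul_of_pos_left _ hKB) (Nat.le_add_right _ _)
end
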